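/- Let k ≥ 1, let a, b ∈ {1, 2, ..., 2k+1} with a odd and b even, and let H_1, H_2, ..., H_{2k+1} be graphs each with n vertices. If the generalized lexicographic product P_{2k+1}[H_1, H_2, ..., H_{2k+1}] contains a Hamiltonian path starting in a vertex of the copy of H_a and ending in a vertex of the copy of H_b, then the sum over i = 0, ..., k of π(H_{2i+1}) is at least n. -/

import Mathlib

open SimpleGraph Finset

/-- The generalized lexicographic product `G[H₁,…,Hₘ]` of a graph `G` on vertices
`u_1, …, u_m` (indexed by `Fin m`, so `u_i` corresponds to index `i-1`) and graphs
`H 0, …, H (m-1)`, each on `n` vertices: each vertex `i` of `G` is replaced by a copy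
of `H i`, and all edges are added between the copies of `H i` and `H j` whenever
`i` and `j` are adjacent in `G`. -/
def genLexProd {m n : ℕ} (G : SimpleGraph (Fin m)) (H : Fin m → SimpleGraph (Fin n)) :
    SimpleGraph (Fin m × Fin n) where
  Adj p q := G.Adj p.1 q.1 ∨ (p.1 = q.1 ∧ (H p.1).Adj p.2 q.2)
  symm := ⟨by
    rintro p q (h | ⟨h1, h2⟩)
    · exact Or.inl h.symm
    · exact Or.inr ⟨h1.symm, by rw [← h1]; exact h2.symm⟩⟩
  loopless := ⟨by
    rintro p (h | ⟨-, h2⟩)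
    · exact G.loopless.irrefl _ h
    · exact (H p.1).loopless.irrefl _ h2⟩

/-- The lexicographic product `G[H]`. -/
def lexProd {α β : Type*} (G : SimpleGraph α) (H : SimpleGraph β) :
    SimpleGraph (α × β) where
  Adj p q := G.Adj p.1 q.1 ∨ (p.1 = q.1 ∧ H.Adj p.2 q.2)
  symm := ⟨by
    rintro p q (h | ⟨h1, h2⟩)
    · exact Or.inl h.symm
    · exact Or.inr ⟨h1.symm, h2.symm⟩⟩
  loopless := ⟨by
    rintro p (h | ⟨-, h2⟩)
    · exact G.loopless.irrefl _ h
    · exact H.loopless.irrefl _ h2⟩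

/-- A linear forest: an acyclic graph in which every vertex has degree at most `2`,
i.e. a forest all of whose components are paths. -/
def SimpleGraph.IsLinearForest {V : Type*} (F : SimpleGraph V) : Prop :=
  F.IsAcyclic ∧ ∀ v : V, (F.neighborSet v).ncard ≤ 2

/-- `piLF H` is `π(H)`: the maximum number of edges of a spanning linear forest of `H`.
(A spanning subgraph of `H` is a graph on the same vertex set all of whose edges are
edges of `H`, i.e. a graph `F ≤ H`.) -/
noncomputable def piLF {V : Type*} (H : SimpleGraph V) : ℕ :=
  sSup {m : ℕ | ∃ F : SimpleGraph V, F ≤ H ∧ F.IsLinearForest ∧ F.edgeSet.ncard = m}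

/-- A graph is traceable if it contains a hamiltonian path. -/
def SimpleGraph.IsTraceable {V : Type*} [DecidableEq V] (G : SimpleGraph V) : Prop :=
  ∃ (u v : V) (p : G.Walk u v), p.IsHamiltonian

/-- A graph is hamiltonian connected if any two distinct vertices are joined by a
hamiltonian path. -/
def SimpleGraph.IsHamiltonianConnected {V : Type*} [DecidableEq V] (G : SimpleGraph V) : Prop :=
  ∀ u v : V, u ≠ v → ∃ p : G.Walk u v, p.IsHamiltonian

/-! ### Auxiliary material -/

/-- The graph on `ℕ` where `a ~ b` iff they differ by one. -/
private def natStep : SimpleGraph ℕ where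
  Adj a b := b = a + 1 ∨ a = b + 1
  symm := ⟨fun _ _ h => Or.symm h⟩
  loopless := ⟨fun a h => by rcases h with h | h <;> omega⟩

private lemma natStep_edge_in_walk {a : ℕ} :
    ∀ {x y : ℕ} (w : natStep.Walk x y), x ≤ a → a + 1 ≤ y → s(a, a + 1) ∈ w.edges := by
  intro x y w
  induction w with
  | nil => intro h1 h2; omega
  | @cons u v z h q ih =>
    intro h1 h2
    rcases le_or_gt v a with hv | hv
    · exact List.mem_cons_of_mem _ (ih hv h2)
    · have huv : u = a ∧ v = a + 1 := by
        rcases (show v = u + 1 ∨ u = v + 1 from h) with h | h <;> omega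
      rw [Walk.edges_cons]
      exact List.mem_cons.mpr (Or.inl (by rw [huv.1, huv.2]))

private lemma natStep_acyclic : natStep.IsAcyclic := by
  rw [isAcyclic_iff_forall_adj_isBridge]
  intro v w h
  rw [isBridge_iff_adj_and_forall_walk_mem_edges]
  refine fun q => ?_
  rcases (show w = v + 1 ∨ v = w + 1 from h) with h | h
  · subst h
    exact natStep_edge_in_walk q le_rfl le_rfl
  · subst h
    have := natStep_edge_in_walk q.reverse le_rfl le_rfl
    rw [Walk.edges_reverse, List.mem_reverse] at this
    rwa [Sym2.eq_swap] at this

/-- Any graph that maps injectively into `natStep` is a linear forest. -/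
private lemma isLinearForest_of_embed {β : Type*} (F : SimpleGraph β) (q : β → ℕ)
    (hinj : Function.Injective q) (hadj : ∀ u v, F.Adj u v → natStep.Adj (q u) (q v)) :
    F.IsLinearForest := by
  let f : F →g natStep := ⟨q, fun h => hadj _ _ h⟩
  have hfinj : Function.Injective (f : β → ℕ) := hinj
  constructor
  · intro v c hc
    exact natStep_acyclic (c.map f) ((Walk.map_isCycle_iff_of_injective hfinj).mpr hc)
  · intro v
    have hsub : ∀ u ∈ F.neighborSet v, q u ∈ ({q v - 1, q v + 1} : Set ℕ) := by
      intro u hu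
      have h := hadj v u hu
      simp only [Set.mem_insert_iff, Set.mem_singleton_iff]
      rcases (show q u = q v + 1 ∨ q v = q u + 1 from h) with h | h
      · right; exact h
      · left; omega
    refine le_trans (Set.ncard_le_ncard_of_injOn q hsub hinj.injOn (by
      exact (Set.finite_singleton _).insert _)) ?_
    refine le_trans (Set.ncard_insert_le _ _) ?_
    simp

private lemma getVert_injOn' {α : Type*} {G : SimpleGraph α} {u v : α} (p : G.Walk u v) :
    p.IsPath → ∀ i j, i ≤ p.length → j ≤ p.length → p.getVert i = p.getVert j → i = j := by
  induction p with
  | nil => intro _ i j hi hj _; simp [Walk.length_nil] at hi hj; omega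
  | @cons a b c h q ih =>
    intro hp i j hi hj hij
    rw [Walk.cons_isPath_iff] at hp
    rw [Walk.length_cons] at hi hj
    match i, j with
    | 0, 0 => rfl
    | 0, (j + 1) =>
      exfalso
      apply hp.2
      rw [Walk.mem_support_iff_exists_getVert]
      refine ⟨j, ?_, by omega⟩
      rw [Walk.getVert_zero] at hij
      rw [Walk.getVert_cons_succ] at hij
      exact hij.symm
    | (i + 1), 0 =>
      exfalso
      apply hp.2
      rw [Walk.mem_support_iff_exists_getVert]
      refine ⟨i, ?_, by omega⟩
      rw [Walk.getVert_zero] at hij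
      rw [Walk.getVert_cons_succ] at hij
      exact hij
    | (i + 1), (j + 1) =>
      have := ih hp.1 i j (by omega) (by omega) (by
        rwa [Walk.getVert_cons_succ, Walk.getVert_cons_succ] at hij)
      omega

theorem odd_path_hampath_odd_even (k n : ℕ) (hk : 1 ≤ k) (a b : ℕ)
    (ha1 : 1 ≤ a) (ha2 : a ≤ 2 * k + 1) (hb1 : 1 ≤ b) (hb2 : b ≤ 2 * k + 1)
    (hao : Odd a) (hbe : Even b)
    (H : Fin (2 * k + 1) → SimpleGraph (Fin n))
    (x y : Fin (2 * k + 1) × Fin n)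
    (p : (genLexProd (pathGraph (2 * k + 1)) H).Walk x y) (hp : p.IsHamiltonian)
    (hx : (x.1 : ℕ) = a - 1) (hy : (y.1 : ℕ) = b - 1) :
    n ≤ ∑ i : Fin (k + 1), piLF (H ⟨2 * i.1, by have := i.2; omega⟩) := by
  classical
  rcases Nat.eq_zero_or_pos n with hn | hn
  · exact le_trans hn.le (Nat.zero_le _)
  have hpath := hp.isPath
  set N := p.length with hN
  have hNlen : N + 1 = (2 * k + 1) * n := by
    have h1 := hp.length_eq
    have hcard : Fintype.card (Fin (2 * k + 1) × Fin n) = (2 * k + 1) * n := by simp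
    rw [hcard] at h1
    have h2 : 1 ≤ (2 * k + 1) * n := Nat.mul_pos (by omega) hn
    omega
  set g : ℕ → Fin (2 * k + 1) × Fin n := p.getVert with hg
  have ginj : ∀ i j, i ≤ N → j ≤ N → g i = g j → i = j := getVert_injOn' p hpath
  have gsurj : ∀ v, ∃ i, g i = v ∧ i ≤ N := by
    intro v
    exact Walk.mem_support_iff_exists_getVert.mp (hp.mem_support v)
  have gadj : ∀ i, i < N → (genLexProd (pathGraph (2 * k + 1)) H).Adj (g i) (g (i + 1)) :=
    fun i hi => p.adj_getVert_succ hi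
  -- positions
  set pos : Fin (2 * k + 1) × Fin n → ℕ := fun v => Classical.choose (gsurj v) with hpos
  have hposspec : ∀ v, g (pos v) = v ∧ pos v ≤ N := fun v => Classical.choose_spec (gsurj v)
  -- the finsets
  set T : Finset ℕ := (range (N + 1)).filter (fun i => Even ((g i).1 : ℕ)) with hT
  set Tc : Finset ℕ := (range (N + 1)).filter (fun i => ¬ Even ((g i).1 : ℕ)) with hTc
  set D : Finset ℕ :=
    (range N).filter (fun i => Even ((g i).1 : ℕ) ∧ Even ((g (i + 1)).1 : ℕ)) with hD
  set Dj : Fin (k + 1) → Finset ℕ := fun j =>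
    (range N).filter (fun i => ((g i).1 : ℕ) = 2 * j.1 ∧ ((g (i + 1)).1 : ℕ) = 2 * j.1) with hDj
  -- step 1: |T| = (k+1)*n
  have hTcard : T.card = (k + 1) * n := by
    have h1 : T.card =
        (univ.filter (fun v : Fin (2 * k + 1) × Fin n => Even ((v.1 : ℕ)))).card := by
      apply Finset.card_bij (fun i _ => g i)
      · intro i hi
        rw [hT, mem_filter] at hi
        exact mem_filter.mpr ⟨mem_univ _, hi.2⟩
      · intro i hi j hj hij
        rw [hT, mem_filter, mem_range] at hi hj
        exact ginj i j (by omega) (by omega) hij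
      · intro v hv
        obtain ⟨i, hgi, hiN⟩ := gsurj v
        refine ⟨i, ?_, hgi⟩
        rw [hT, mem_filter, mem_range]
        rw [mem_filter] at hv
        exact ⟨by omega, by rw [hgi]; exact hv.2⟩
    have h2 : (univ.filter (fun v : Fin (2 * k + 1) × Fin n => Even ((v.1 : ℕ)))) =
        (univ.filter (fun c : Fin (2 * k + 1) => Even (c : ℕ))) ×ˢ (univ : Finset (Fin n)) := by
      ext ⟨c, d⟩
      simp [Finset.mem_product]
    have h3 : (univ.filter (fun c : Fin (2 * k + 1) => Even (c : ℕ))).card = k + 1 := by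
      rw [show k + 1 = (univ : Finset (Fin (k + 1))).card by simp]
      apply Finset.card_nbij'
        (i := fun c : Fin (2 * k + 1) => (⟨(c : ℕ) / 2, by have := c.2; omega⟩ : Fin (k + 1)))
        (j := fun j : Fin (k + 1) => (⟨2 * j.1, by have := j.2; omega⟩ : Fin (2 * k + 1)))
      · intro c hc; exact mem_univ _
      · intro j hj
        rw [mem_coe, mem_filter]
        refine ⟨mem_univ _, ⟨j.1, ?_⟩⟩
        show 2 * j.1 = j.1 + j.1
        omega
      · intro c hc
        rw [mem_coe, mem_filter] at hc
        obtain ⟨-, m, hm⟩ := hc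
        apply Fin.ext
        show 2 * ((c : ℕ) / 2) = (c : ℕ)
        omega
      · intro j hj
        apply Fin.ext
        show 2 * j.1 / 2 = j.1
        omega
    rw [h1, h2, Finset.card_product, h3, Finset.card_univ, Fintype.card_fin]
  -- step 2: |Tc| = k*n
  have hTccard : Tc.card = k * n := by
    have h1 := Finset.card_filter_add_card_filter_not
      (s := range (N + 1)) (p := fun i => Even ((g i).1 : ℕ))
    rw [card_range] at h1
    have h2 : (2 * k + 1) * n = (k + 1) * n + k * n := by ring
    rw [← hT, ← hTc] at h1
    omega
  -- step 3: the last vertex is in an even (odd-valued) copy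
  have hNend : ¬ Even ((g N).1 : ℕ) := by
    have hgN : g N = y := p.getVert_length
    rw [hgN, hy]
    rw [Nat.even_iff] at hbe ⊢
    omega
  -- step 4: n ≤ |D|
  have hDlb : n ≤ D.card := by
    have h1 : (T.filter (fun i => i ∈ D)).card ≤ D.card := by
      apply card_le_card
      intro i hi
      exact (mem_filter.mp hi).2
    have h2 : (T.filter (fun i => i ∉ D)).card ≤ Tc.card := by
      apply Finset.card_le_card_of_injOn (fun i => i + 1)
      · intro i hi
        rw [mem_coe, mem_filter] at hi
        obtain ⟨hiT, hiD⟩ := hi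
        rw [hT, mem_filter, mem_range] at hiT
        obtain ⟨hiN, hev⟩ := hiT
        have hiNe : i ≠ N := fun h => hNend (h ▸ hev)
        show i + 1 ∈ Tc
        rw [hTc, mem_filter, mem_range]
        refine ⟨by omega, ?_⟩
        intro hev2
        apply hiD
        rw [hD, mem_filter, mem_range]
        exact ⟨by omega, hev, hev2⟩
      · intro i _ j _ hij
        exact Nat.succ_injective hij
    have h3 := Finset.card_filter_add_card_filter_not
      (s := T) (p := fun i => i ∈ D)
    have h4 : (k + 1) * n = k * n + n := by ring
    omega
  -- step 5: D ⊆ ⋃ⱼ Dⱼ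
  have hDsub : D ⊆ univ.biUnion Dj := by
    intro i hi
    rw [hD, mem_filter, mem_range] at hi
    obtain ⟨hiN, hev1, hev2⟩ := hi
    have hadj := gadj i hiN
    rcases hadj with hP | ⟨heq, -⟩
    · rw [pathGraph_adj] at hP
      rw [Nat.even_iff] at hev1 hev2
      omega
    · obtain ⟨m, hm⟩ := hev1
      have hm2 : m < k + 1 := by
        have := (g i).1.2
        omega
      rw [mem_biUnion]
      refine ⟨⟨m, hm2⟩, mem_univ _, ?_⟩
      have hv1 : ((g i).1 : ℕ) = 2 * m := by omega
      have hv2 : ((g (i + 1)).1 : ℕ) = 2 * m := by rw [← heq]; omega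
      rw [hDj]
      simp only [mem_filter, mem_range]
      exact ⟨hiN, by simpa using hv1, by simpa using hv2⟩
  -- step 6: per-copy bound
  have hperj : ∀ j : Fin (k + 1),
      (Dj j).card ≤ piLF (H ⟨2 * j.1, by have := j.2; omega⟩) := by
    intro j
    set c : Fin (2 * k + 1) := ⟨2 * j.1, by have := j.2; omega⟩ with hc
    let F : SimpleGraph (Fin n) :=
      { Adj := fun u v => (H c).Adj u v ∧ p.toSubgraph.Adj (c, u) (c, v)
        symm := ⟨fun u v h => ⟨h.1.symm, h.2.symm⟩⟩
        loopless := ⟨fun u h => (H c).loopless.irrefl u h.1⟩ }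
    have hFle : F ≤ H c := fun {u v} h => h.1
    have hFlf : F.IsLinearForest := by
      apply isLinearForest_of_embed F (fun u => pos (c, u))
      · intro u v huv
        have h1 : g (pos (c, u)) = (c, u) := (hposspec _).1
        have h2 : g (pos (c, v)) = (c, v) := (hposspec _).1
        have h3 : ((c, u) : Fin (2 * k + 1) × Fin n) = (c, v) := by
          rw [← h1, ← h2]
          exact congrArg g huv
        exact congrArg Prod.snd h3
      · intro u v huv
        obtain ⟨i, hs, hiN⟩ := (Walk.toSubgraph_adj_iff p).mp huv.2
        rw [Sym2.eq_iff] at hs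
        have hu := (hposspec (c, u))
        have hv := (hposspec (c, v))
        rcases hs with ⟨e1, e2⟩ | ⟨e1, e2⟩
        · have hpu : pos (c, u) = i := ginj _ i hu.2 (by omega) (by rw [hu.1, ← e1])
          have hpv : pos (c, v) = i + 1 := ginj _ (i + 1) hv.2 (by omega) (by rw [hv.1, ← e2])
          left; omega
        · have hpu : pos (c, u) = i + 1 := ginj _ (i + 1) hu.2 (by omega) (by rw [hu.1, ← e2])
          have hpv : pos (c, v) = i := ginj _ i hv.2 (by omega) (by rw [hv.1, ← e1])
          right; omega
    have hcardle : (Dj j).card ≤ F.edgeSet.ncard := by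
      have hfin : F.edgeSet.Finite := Set.toFinite _
      rw [Set.ncard_eq_toFinset_card _ hfin]
      apply Finset.card_le_card_of_injOn (fun i => s((g i).2, (g (i + 1)).2))
      · intro i hi
        rw [mem_coe, hDj, mem_filter, mem_range] at hi
        obtain ⟨hiN, hv1, hv2⟩ := hi
        have hc1 : (g i).1 = c := Fin.ext (by rw [hv1])
        have hc2 : (g (i + 1)).1 = c := Fin.ext (by rw [hv2])
        rw [mem_coe, Set.Finite.mem_toFinset]
        show F.Adj (g i).2 (g (i + 1)).2
        constructor
        · rcases gadj i hiN with hP | ⟨heq, hH⟩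
          · rw [pathGraph_adj] at hP
            omega
          · rwa [hc1] at hH
        · have hadj : p.toSubgraph.Adj (g i) (g (i + 1)) :=
            p.toSubgraph_adj_getVert (i := i) hiN
          have e1 : g i = (c, (g i).2) := Prod.ext hc1 rfl
          have e2 : g (i + 1) = (c, (g (i + 1)).2) := Prod.ext hc2 rfl
          rw [e1, e2] at hadj
          exact hadj
      · intro i hi i' hi' hs
        have hi1 : i ∈ Dj j := hi
        have hi2 : i' ∈ Dj j := hi'
        rw [hDj, mem_filter, mem_range] at hi1 hi2
        obtain ⟨hiN, hv1, hv2⟩ := hi1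
        obtain ⟨hiN', hv1', hv2'⟩ := hi2
        rw [Sym2.eq_iff] at hs
        have hfst : ∀ m m', ((g m).1 : ℕ) = 2 * j.1 → ((g m').1 : ℕ) = 2 * j.1 →
            (g m).2 = (g m').2 → g m = g m' := by
          intro m m' h1 h2 h3
          exact Prod.ext (Fin.ext (by rw [h1, h2])) h3
        rcases hs with ⟨e1, e2⟩ | ⟨e1, e2⟩
        · exact ginj i i' (by omega) (by omega) (hfst i i' hv1 hv1' e1)
        · have q1 : i = i' + 1 := ginj i (i' + 1) (by omega) (by omega) (hfst _ _ hv1 hv2' e1)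
          have q2 : i + 1 = i' := ginj (i + 1) i' (by omega) (by omega) (hfst _ _ hv2 hv1' e2)
          omega
    refine le_trans hcardle ?_
    apply le_csSup
    · refine ⟨Nat.card (Sym2 (Fin n)), fun m hm => ?_⟩
      obtain ⟨F', -, -, rfl⟩ := hm
      rw [← Set.ncard_univ]
      exact Set.ncard_le_ncard (Set.subset_univ _) Set.finite_univ
    · exact ⟨F, hFle, hFlf, rfl⟩
  -- putting it together
  calc n ≤ D.card := hDlb
    _ ≤ (univ.biUnion Dj).card := card_le_card hDsub
    _ ≤ ∑ j : Fin (k + 1), (Dj j).card := card_biUnion_le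
    _ ≤ ∑ j : Fin (k + 1), piLF (H ⟨2 * j.1, by have := j.2; omega⟩) :=
        Finset.sum_le_sum (fun j _ => hperj j)
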